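/- arXiv:2604.02997 — 2 statements merged into one kernel-verified Lean document; each statement's English description precedes it below -/
import Mathlib

section
/- Let R = ℂ[E₁,E₂] with the derivation e determined by e(E₁) = −2, e(E₂) = −E₁, and δ = 4E₂ − E₁². Then the kernel of e on R is exactly the ℂ-subalgebra generated by δ: a polynomial P ∈ ℂ[E₁,E₂] satisfies e(P) = 0 if and only if P is a polynomial in δ (equivalently, P ∈ ℂ[δ]). -/
open MvPolynomial

noncomputable section KerEAux

local notation "R2" => MvPolynomial (Fin 2) ℂ

private lemma coeff_pderiv_aux {σ : Type*} [DecidableEq σ] (i : σ) (m : σ →₀ ℕ)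
    (Q : MvPolynomial σ ℂ) :
    coeff m (pderiv i Q) = (m i + 1 : ℕ) * coeff (m + Finsupp.single i 1) Q := by
  induction Q using MvPolynomial.induction_on' with
  | monomial s a =>
    rw [pderiv_monomial, coeff_monomial, coeff_monomial]
    by_cases h : s = m + Finsupp.single i 1
    · subst h
      simp [Finsupp.add_apply, Finsupp.single_apply, mul_comm]
    · rw [if_neg h]
      by_cases h2 : s - Finsupp.single i 1 = m
      · rw [if_pos h2]
        have hsi : s i = 0 := by
          by_contra hsi
          apply h
          rw [← h2]
          ext j
          by_cases hj : j = i
          · subst hj; simp [Finsupp.single_apply]; omega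
          · simp [Finsupp.single_apply, Ne.symm hj]
        simp [hsi]
      · rw [if_neg h2, mul_zero]
  | add p q hp hq => simp [hp, hq, mul_add]

private lemma mem_adjoin_X1_of_pderiv0 (Q : R2)
    (h : pderiv (0 : Fin 2) Q = 0) :
    Q ∈ Algebra.adjoin ℂ ({X 1} : Set R2) := by
  have hsupp : Q ∈ supported ℂ ({1} : Set (Fin 2)) := by
    rw [mem_supported]
    intro i hi
    rw [Finset.mem_coe, mem_vars] at hi
    obtain ⟨m, hm, him⟩ := hi
    fin_cases i
    · exfalso
      have hm0 : m 0 ≠ 0 := Finsupp.mem_support_iff.mp him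
      set m' : Fin 2 →₀ ℕ := m - Finsupp.single 0 1 with hm'
      have hmm : m' + Finsupp.single 0 1 = m := by
        ext j
        by_cases hj : j = 0
        · subst hj; simp [hm', Finsupp.single_apply]; omega
        · simp [hm', Finsupp.single_apply, Ne.symm hj, hj]
      have key := coeff_pderiv_aux (0 : Fin 2) m' Q
      rw [h, hmm] at key
      simp only [coeff_zero] at key
      have hQm : coeff m Q ≠ 0 := Finsupp.mem_support_iff.mp hm
      rcases mul_eq_zero.mp key.symm with h' | h'
      · exact_mod_cast h'
      · exact hQm h'
    · exact Set.mem_singleton _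
  rw [supported_eq_adjoin_X, Set.image_singleton] at hsupp
  exact hsupp

private def ψa : R2 →ₐ[ℂ] R2 := aeval ![X 0, 4 * X 1 - X 0 ^ 2]
private def φa : R2 →ₐ[ℂ] R2 := aeval ![X 0, C (1/4 : ℂ) * (X 1 + X 0 ^ 2)]

private lemma four_eq_C : (4 : R2) = C (4 : ℂ) := by
  simp [map_ofNat]

private lemma ψφ : ψa.comp φa = AlgHom.id ℂ R2 := by
  apply MvPolynomial.algHom_ext
  intro i
  fin_cases i <;>
    simp [ψa, φa, four_eq_C, ← C_mul] <;> ring_nf <;>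
    simp [← C_mul] <;> ring_nf

private lemma φψ : φa.comp ψa = AlgHom.id ℂ R2 := by
  apply MvPolynomial.algHom_ext
  intro i
  fin_cases i <;>
    simp [ψa, φa, four_eq_C, ← C_mul] <;> ring_nf <;>
    simp [← C_mul] <;> ring_nf

/-- The model derivation `-2 ∂/∂X₀`. -/
private def Dm : Derivation ℂ R2 R2 := mkDerivation ℂ ![(-2 : R2), 0]

private lemma Dm_eq (Q : R2) : Dm Q = (-2 : R2) * pderiv (0 : Fin 2) Q := by
  have : Dm = (-2 : R2) • pderiv (0 : Fin 2) := by
    apply derivation_ext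
    intro i
    fin_cases i <;> simp [Dm]
  rw [this]; rfl

private lemma e_psi (e : Derivation ℂ R2 R2)
    (he1 : e (X 0) = -2) (he2 : e (X 1) = -X 0) (Q : R2) :
    e (ψa Q) = ψa (Dm Q) := by
  have h4 : e (4 : R2) = 0 := by
    rw [four_eq_C, show (C (4 : ℂ) : R2) = algebraMap ℂ R2 4 from rfl]
    exact e.map_algebraMap 4
  have hX : ∀ i : Fin 2, e (ψa (X i)) = ψa (Dm (X i)) := by
    intro i
    fin_cases i
    · simp [ψa, Dm, he1, map_ofNat]
    · simp only [ψa, Dm, aeval_X, mkDerivation_X]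
      show e (![X 0, 4 * X 1 - X 0 ^ 2] 1) = (aeval ![X 0, 4 * X 1 - X 0 ^ 2]) (![(-2 : R2), 0] 1)
      simp only [Matrix.cons_val_one, Matrix.head_cons, Matrix.cons_val_zero, map_zero]
      rw [map_sub, Derivation.leibniz, Derivation.leibniz_pow, he1, he2, h4]
      simp only [smul_eq_mul]
      ring
  induction Q using MvPolynomial.induction_on with
  | C a =>
    rw [show (C a : R2) = algebraMap ℂ R2 a from rfl, Dm.map_algebraMap,
      AlgHom.commutes, e.map_algebraMap, map_zero]
  | add p q hp hq => simp [map_add, hp, hq]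
  | mul_X p i hp =>
    rw [map_mul, Derivation.leibniz, Dm.leibniz]
    simp only [smul_eq_mul, map_add, map_mul, hp, hX i]

end KerEAux

/-- In `R = ℂ[E₁,E₂]` with the derivation `e` determined by
`e(E₁) = -2`, `e(E₂) = -E₁`, and `δ = 4E₂ - E₁²`, the kernel of `e` is exactly the
`ℂ`-subalgebra generated by `δ`: `e(P) = 0 ↔ P ∈ ℂ[δ]`. Here `E₁ = X 0`, `E₂ = X 1`. -/
theorem ker_e_eq_adjoin_delta
    (e : Derivation ℂ (MvPolynomial (Fin 2) ℂ) (MvPolynomial (Fin 2) ℂ))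
    (he1 : e (X 0) = -2) (he2 : e (X 1) = -X 0)
    (δ : MvPolynomial (Fin 2) ℂ) (hδ : δ = 4 * X 1 - X 0 ^ 2)
    (P : MvPolynomial (Fin 2) ℂ) :
    e P = 0 ↔ P ∈ Algebra.adjoin ℂ ({δ} : Set (MvPolynomial (Fin 2) ℂ)) := by
  have hψδ : ψa (X 1) = δ := by
    simp [ψa, hδ]
  have hψinj : Function.Injective ψa := by
    intro a b hab
    have := congrArg φa hab
    have h1 : ∀ x, φa (ψa x) = x := fun x => congrArg (fun F => F x) φψ
    rwa [h1, h1] at this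
  constructor
  · intro heP
    have hPψ : ψa (φa P) = P := congrArg (fun F => F P) ψφ
    set Q := φa P with hQ
    have h1 : e (ψa Q) = ψa (Dm Q) := e_psi e he1 he2 Q
    rw [hPψ, heP] at h1
    have h2 : Dm Q = 0 := by
      apply hψinj
      rw [map_zero, ← h1]
    rw [Dm_eq] at h2
    have h3 : pderiv (0 : Fin 2) Q = 0 := by
      rcases mul_eq_zero.mp h2 with h' | h'
      · exact absurd h' (by norm_num)
      · exact h'
    have h4 : Q ∈ Algebra.adjoin ℂ ({X 1} : Set (MvPolynomial (Fin 2) ℂ)) :=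
      mem_adjoin_X1_of_pderiv0 Q h3
    have h5 : P ∈ (Algebra.adjoin ℂ ({X 1} : Set (MvPolynomial (Fin 2) ℂ))).map ψa :=
      ⟨Q, h4, hPψ⟩
    rwa [AlgHom.map_adjoin_singleton, hψδ] at h5
  · intro hP
    have hδ0 : e δ = 0 := by
      have h4 : e (4 : MvPolynomial (Fin 2) ℂ) = 0 := by
        rw [show (4 : MvPolynomial (Fin 2) ℂ) = algebraMap ℂ _ 4 by simp [map_ofNat]]
        exact e.map_algebraMap 4
      rw [hδ, map_sub, Derivation.leibniz, Derivation.leibniz_pow, he1, he2, h4]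
      simp only [smul_eq_mul]
      ring
    induction hP using Algebra.adjoin_induction with
    | mem x hx => rw [Set.mem_singleton_iff.mp hx, hδ0]
    | algebraMap r => exact e.map_algebraMap r
    | add x y _ _ hx hy => rw [map_add, hx, hy, add_zero]
    | mul x y _ _ hx hy => rw [Derivation.leibniz, hx, hy, smul_zero, smul_zero, add_zero]
end

section
/- Let 𝒜 = ℂ[E₁,E₂,A₀,A₁] with the derivation f as above, δ = 4E₂ − E₁² and v = A₀ − (1/2)E₁A₁. Fix natural numbers j, m, n and set γ = 2j + (n−m)/2 ∈ ℂ. Then for every integer r ≥ 1, f^r(δʲ A₁^m v^n) = ∑_{k+2a=r, k,a ≥ 0} (−1)^a · ((k+2a)(k+2a−1)⋯(k+1)/a!) · (γ)(γ+1)⋯(γ+r−a−1) · E₁^k E₂^a · δʲ A₁^m v^n, where the factor (k+2a)⋯(k+1) equals 1 when a = 0 and the factor (γ)⋯(γ+r−a−1) is the product ∏_{i=0}^{r−a−1}(γ+i). -/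
open MvPolynomial

/-! ### Auxiliary scalar machinery -/

/-- Ascending product `AP x t = x (x+1) ⋯ (x+t-1)`. -/
noncomputable def AP (x : ℂ) : ℕ → ℂ
  | 0 => 1
  | t+1 => AP x t * (x + t)

@[simp] lemma AP_zero (x : ℂ) : AP x 0 = 1 := rfl

lemma AP_succ (x : ℂ) (t : ℕ) : AP x (t+1) = AP x t * (x + t) := rfl

lemma AP_bot (x : ℂ) (t : ℕ) : AP x (t+1) = x * AP (x+1) t := by
  induction t with
  | zero => simp [AP]
  | succ t ih =>
    rw [AP_succ, ih, AP_succ]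
    push_cast
    ring

lemma AP_eq_prod (x : ℂ) (t : ℕ) : ∏ i ∈ Finset.range t, (x + i) = AP x t := by
  induction t with
  | zero => simp
  | succ t ih => rw [Finset.prod_range_succ, ih, AP_succ]

lemma desc_eq (k a : ℕ) :
    ∏ i ∈ Finset.range (2*a), ((k:ℂ) + 2*a - i) = AP ((k:ℂ)+1) (2*a) := by
  rw [← AP_eq_prod, ← Finset.prod_range_reflect]
  refine Finset.prod_congr rfl fun i hi => ?_
  have hi' := Finset.mem_range.mp hi
  have h1 : (2*a - 1 - i : ℕ) = 2*a - (i+1) := by omega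
  rw [h1, Nat.cast_sub (by omega)]
  push_cast
  ring

/-- The coefficient appearing in the formula. -/
noncomputable def cc (γ : ℂ) (k a : ℕ) : ℂ :=
  (-1:ℂ)^a * (AP ((k:ℂ)+1) (2*a) / (a.factorial : ℂ)) * AP γ (k+a)

lemma rec1 (γ : ℂ) (k : ℕ) : cc γ (k+1) 0 = (γ + k) * cc γ k 0 := by
  simp [cc, AP_succ]
  ring

lemma rec3 (γ : ℂ) (a : ℕ) : cc γ 0 (a+1) = -2 * cc γ 1 a := by
  simp only [cc]
  have p1 : AP (((0:ℕ):ℂ)+1) (2*(a+1)) = AP (((1:ℕ):ℂ)+1) (2*a) * (2*(a:ℂ)+2) := by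
    rw [show 2*(a+1) = (2*a)+1+1 by ring, AP_succ, AP_bot]
    push_cast
    ring_nf
  rw [p1, show (0:ℕ)+(a+1) = 1+a by omega, Nat.factorial_succ]
  have ha : (a.factorial : ℂ) ≠ 0 := Nat.cast_ne_zero.mpr a.factorial_ne_zero
  have ha1 : ((a:ℂ) + 1) ≠ 0 := by
    have : ((a+1 : ℕ) : ℂ) ≠ 0 := Nat.cast_ne_zero.mpr (by omega)
    push_cast at this; exact this
  push_cast
  field_simp
  ring

lemma rec2 (γ : ℂ) (k a : ℕ) :
    cc γ (k+1) (a+1)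
      = (γ + (k:ℂ) + ((a:ℂ)+1)) * cc γ k (a+1) - 2*((k:ℂ)+2) * cc γ (k+2) a := by
  simp only [cc]
  have p1 : AP (((k+1:ℕ):ℂ)+1) (2*(a+1))
      = ((k:ℂ)+2) * AP (((k+2:ℕ):ℂ)+1) (2*a) * ((k:ℂ)+3+2*(a:ℂ)) := by
    rw [show 2*(a+1) = (2*a)+1+1 by ring, AP_succ, AP_bot]
    push_cast
    ring_nf
  have p2 : AP (((k:ℕ):ℂ)+1) (2*(a+1))
      = ((k:ℂ)+1) * (((k:ℂ)+2) * AP (((k+2:ℕ):ℂ)+1) (2*a)) := by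
    rw [show 2*(a+1) = (2*a)+1+1 by ring, AP_bot, AP_bot]
    push_cast
    ring_nf
  have g1 : AP γ ((k+1)+(a+1)) = AP γ (k+(a+1)) * (γ + (k:ℂ) + (a:ℂ) + 1) := by
    rw [show (k+1)+(a+1) = (k+(a+1))+1 by ring, AP_succ]
    push_cast
    ring
  have g2 : AP γ ((k+2)+a) = AP γ (k+(a+1)) * (γ + (k:ℂ) + (a:ℂ) + 1) := by
    rw [show (k+2)+a = (k+(a+1))+1 by ring, AP_succ]
    push_cast
    ring
  rw [p1, p2, g1, g2, Nat.factorial_succ]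
  have ha : (a.factorial : ℂ) ≠ 0 := Nat.cast_ne_zero.mpr a.factorial_ne_zero
  have ha1 : ((a:ℂ) + 1) ≠ 0 := by
    have : ((a+1 : ℕ) : ℂ) ≠ 0 := Nat.cast_ne_zero.mpr (by omega)
    push_cast at this; exact this
  push_cast
  field_simp
  ring

/-- The coefficient with the constraint `k + 2a = r` built in. -/
noncomputable def ch (γ : ℂ) (r k a : ℕ) : ℂ := if k + 2*a = r then cc γ k a else 0

lemma e_identity (γ : ℂ) (r k a : ℕ) :
    (if k = 0 then 0 else ch γ r (k-1) a * (γ + ((k-1:ℕ):ℂ) + a))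
      - (if a = 0 then 0 else 2*((k:ℂ)+1) * ch γ r (k+1) (a-1))
    = ch γ (r+1) k a := by
  rcases k with _|k <;> rcases a with _|a
  · rw [if_pos rfl, if_pos rfl]
    simp only [ch]
    rw [if_neg (by omega)]
    simp
  · rw [if_pos rfl, if_neg (Nat.succ_ne_zero a)]
    simp only [ch, Nat.add_sub_cancel]
    by_cases h : 0 + 2*(a+1) = r + 1
    · rw [if_pos (by omega : 0+1 + 2*a = r), if_pos h, rec3]
      push_cast
      ring
    · rw [if_neg (by omega), if_neg h]
      simp
  · rw [if_neg (Nat.succ_ne_zero k), if_pos rfl]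
    simp only [ch, Nat.add_sub_cancel]
    by_cases h : (k+1) + 2*0 = r+1
    · rw [if_pos (by omega : k + 2*0 = r), if_pos h, rec1]
      push_cast
      ring
    · rw [if_neg (by omega), if_neg h]
      simp
  · rw [if_neg (Nat.succ_ne_zero k), if_neg (Nat.succ_ne_zero a)]
    simp only [ch, Nat.add_sub_cancel]
    by_cases h : (k+1) + 2*(a+1) = r+1
    · rw [if_pos (by omega : k + 2*(a+1) = r), if_pos (by omega : k+1+1 + 2*a = r),
        if_pos h, rec2]
      push_cast
      ring
    · rw [if_neg (by omega), if_neg (by omega), if_neg h]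
      simp

/-! ### Polynomial side -/

abbrev R4 : Type := MvPolynomial (Fin 4) ℂ

lemma key_step (f : Derivation ℂ R4 R4)
    (hf1 : f (X 0) = X 0 ^ 2 - 2 * X 1) (hf2 : f (X 1) = X 0 * X 1)
    (P : R4) (γ : ℂ) (hP : f P = γ • (X 0 * P)) (k a : ℕ) :
    f (X 0^k * X 1^a * P) =
      (γ + k + a) • (X 0^(k+1) * X 1^a * P)
        - (2*(k:ℂ)) • (X 0^(k-1) * X 1^(a+1) * P) := by
  rw [Derivation.leibniz, Derivation.leibniz, Derivation.leibniz_pow, Derivation.leibniz_pow,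
    hf1, hf2, hP]
  simp only [← Nat.cast_smul_eq_nsmul ℂ, smul_eq_mul, smul_eq_C_mul, map_add, C_1]
  rcases k with _|k <;> rcases a with _|a <;>
    · push_cast
      simp only [Nat.add_sub_cancel, pow_zero, pow_succ, Nat.cast_zero, mul_zero, zero_mul,
        map_zero, map_add, map_mul, map_one, map_ofNat]
      ring

lemma fP_eq (f : Derivation ℂ R4 R4)
    (hf1 : f (X 0) = X 0 ^ 2 - 2 * X 1) (hf2 : f (X 1) = X 0 * X 1)
    (hf3 : f (X 2) = (1 / 2 : ℂ) • (X 0 * X 2) - X 1 * X 3)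
    (hf4 : f (X 3) = -((1 / 2 : ℂ) • (X 0 * X 3)))
    (δ v : R4)
    (hδ : δ = 4 * X 1 - X 0 ^ 2) (hv : v = X 2 - (1 / 2 : ℂ) • (X 0 * X 3))
    (j m n : ℕ) (γ : ℂ) (hγ : γ = 2 * j + ((n : ℂ) - m) / 2) :
    f (δ ^ j * X 3 ^ m * v ^ n) = γ • (X 0 * (δ ^ j * X 3 ^ m * v ^ n)) := by
  have hhalf : (C (1/2 : ℂ) : R4) * 2 = 1 := by
    rw [show (2 : R4) = C (2:ℂ) from (map_ofNat C 2).symm, ← C_mul]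
    norm_num
  have h4 : f (4 * X 1) = 4 * (X 0 * X 1) := by
    rw [show (4 : R4) * X 1 = (4:ℂ) • X 1 from by rw [smul_eq_C_mul, map_ofNat],
      Derivation.map_smul, hf2, smul_eq_C_mul, map_ofNat]
  have hδ' : f δ = (2:ℂ) • (X 0 * δ) := by
    rw [hδ, map_sub, h4, Derivation.leibniz_pow, hf1]
    simp only [← Nat.cast_smul_eq_nsmul ℂ, smul_eq_mul, smul_eq_C_mul]
    push_cast
    simp only [map_ofNat]
    ring
  have hv' : f v = (1/2:ℂ) • (X 0 * v) := by
    rw [hv, map_sub, hf3, Derivation.map_smul, Derivation.leibniz, hf1, hf4]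
    simp only [smul_eq_mul, smul_eq_C_mul]
    linear_combination (X 1 * X 3 + C (1/2:ℂ) * X 0^2 * X 3) * hhalf
  have hδj : f (δ ^ j) = ((j:ℂ) * 2) • (X 0 * δ ^ j) := by
    rcases j with _|j
    · simp
    · rw [Derivation.leibniz_pow, hδ']
      simp only [← Nat.cast_smul_eq_nsmul ℂ, Nat.add_sub_cancel, smul_eq_mul, smul_eq_C_mul,
        map_mul]
      push_cast
      simp only [map_add, map_mul, map_one, map_ofNat]
      ring
  have hX3m : f (X 3 ^ m) = ((m:ℂ) * (-(1/2))) • (X 0 * X 3 ^ m) := by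
    rcases m with _|m
    · simp
    · rw [Derivation.leibniz_pow, hf4]
      simp only [← Nat.cast_smul_eq_nsmul ℂ, Nat.add_sub_cancel, smul_eq_mul, smul_eq_C_mul,
        map_mul, map_neg]
      push_cast
      simp only [map_add, map_mul, map_one, map_neg, map_ofNat]
      ring
  have hvn : f (v ^ n) = ((n:ℂ) * (1/2)) • (X 0 * v ^ n) := by
    rcases n with _|n
    · simp
    · rw [Derivation.leibniz_pow, hv']
      simp only [← Nat.cast_smul_eq_nsmul ℂ, Nat.add_sub_cancel, smul_eq_mul, smul_eq_C_mul,
        map_mul]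
      push_cast
      simp only [map_add, map_mul, map_one, map_ofNat]
      ring
  rw [Derivation.leibniz, Derivation.leibniz, hδj, hX3m, hvn, hγ,
    show (2*(j:ℂ) + ((n:ℂ)-m)/2) = (j:ℂ)*2 + ((n:ℂ)*(1/2) - (m:ℂ)*(1/2)) from by ring]
  simp only [smul_eq_mul, smul_eq_C_mul]
  simp only [map_add, map_mul, map_sub, map_neg, map_one, map_natCast]
  simp only [map_ofNat]
  ring

lemma main_induction (f : Derivation ℂ R4 R4) (P : R4) (γ : ℂ)
    (hkey : ∀ k a : ℕ, f (X 0^k * X 1^a * P) =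
        (γ + k + a) • (X 0^(k+1) * X 1^a * P) - (2*(k:ℂ)) • (X 0^(k-1) * X 1^(a+1) * P))
    (r : ℕ) :
    (f.toLinearMap ^ r) P =
      ∑ p ∈ Finset.range (r+1) ×ˢ Finset.range (r+1),
        ch γ r p.1 p.2 • (X 0^p.1 * X 1^p.2 * P) := by
  induction r with
  | zero =>
    simp only [pow_zero, Module.End.one_apply, Finset.range_one, Finset.sum_product,
      Finset.sum_singleton]
    simp [ch, cc, AP]
  | succ r ih =>
    have hstep : (f.toLinearMap ^ (r+1)) P = f.toLinearMap ((f.toLinearMap ^ r) P) := by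
      rw [pow_succ']; rfl
    rw [hstep, ih, map_sum]
    have hterm : ∀ p : ℕ × ℕ,
        f.toLinearMap (ch γ r p.1 p.2 • (X 0^p.1 * X 1^p.2 * P))
          = (ch γ r p.1 p.2 * (γ + p.1 + p.2)) • (X 0^(p.1+1) * X 1^p.2 * P)
            - (ch γ r p.1 p.2 * (2*(p.1:ℂ))) • (X 0^(p.1-1) * X 1^(p.2+1) * P) := by
      intro p
      rw [map_smul]
      show ch γ r p.1 p.2 • f _ = _
      rw [hkey p.1 p.2, smul_sub, smul_smul, smul_smul]
    rw [Finset.sum_congr rfl (fun p _ => hterm p), Finset.sum_sub_distrib]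
    have hS1 : (∑ p ∈ Finset.range (r+1) ×ˢ Finset.range (r+1),
          (ch γ r p.1 p.2 * (γ + p.1 + p.2)) • (X 0^(p.1+1) * X 1^p.2 * P))
        = ∑ p ∈ Finset.range (r+1+1) ×ˢ Finset.range (r+1+1),
          (if p.1 = 0 then 0 else ch γ r (p.1-1) p.2 * (γ + ((p.1-1:ℕ):ℂ) + p.2))
            • (X 0^p.1 * X 1^p.2 * P) := by
      rw [Finset.sum_product, Finset.sum_product]
      calc ∑ k ∈ Finset.range (r+1), ∑ a ∈ Finset.range (r+1),
            (ch γ r k a * (γ + k + a)) • (X 0^(k+1) * X 1^a * P)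
          = ∑ k ∈ Finset.range (r+1), ∑ a ∈ Finset.range (r+1+1),
            (ch γ r k a * (γ + k + a)) • (X 0^(k+1) * X 1^a * P) := by
            refine Finset.sum_congr rfl fun k _ => ?_
            conv_rhs => rw [Finset.sum_range_succ]
            rw [show ch γ r k (r+1) = 0 from by rw [ch, if_neg (by omega)]]
            simp
        _ = ∑ a ∈ Finset.range (r+1+1), ∑ k ∈ Finset.range (r+1),
            (ch γ r k a * (γ + k + a)) • (X 0^(k+1) * X 1^a * P) := Finset.sum_comm
        _ = ∑ a ∈ Finset.range (r+1+1), ∑ k ∈ Finset.range (r+1+1),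
            (if k = 0 then 0 else ch γ r (k-1) a * (γ + ((k-1:ℕ):ℂ) + a))
              • (X 0^k * X 1^a * P) := by
            refine Finset.sum_congr rfl fun a _ => ?_
            conv_rhs => rw [Finset.sum_range_succ']
            simp [Nat.add_sub_cancel]
        _ = ∑ k ∈ Finset.range (r+1+1), ∑ a ∈ Finset.range (r+1+1),
            (if k = 0 then 0 else ch γ r (k-1) a * (γ + ((k-1:ℕ):ℂ) + a))
              • (X 0^k * X 1^a * P) := Finset.sum_comm
    have hS2 : (∑ p ∈ Finset.range (r+1) ×ˢ Finset.range (r+1),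
          (ch γ r p.1 p.2 * (2*(p.1:ℂ))) • (X 0^(p.1-1) * X 1^(p.2+1) * P))
        = ∑ p ∈ Finset.range (r+1+1) ×ˢ Finset.range (r+1+1),
          (if p.2 = 0 then 0 else 2*((p.1:ℂ)+1) * ch γ r (p.1+1) (p.2-1))
            • (X 0^p.1 * X 1^p.2 * P) := by
      rw [Finset.sum_product, Finset.sum_product]
      calc ∑ k ∈ Finset.range (r+1), ∑ a ∈ Finset.range (r+1),
            (ch γ r k a * (2*(k:ℂ))) • (X 0^(k-1) * X 1^(a+1) * P)
          = ∑ a ∈ Finset.range (r+1), ∑ k ∈ Finset.range (r+1),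
            (ch γ r k a * (2*(k:ℂ))) • (X 0^(k-1) * X 1^(a+1) * P) := Finset.sum_comm
        _ = ∑ a ∈ Finset.range (r+1), ∑ k ∈ Finset.range (r+1+1),
            (2*((k:ℂ)+1) * ch γ r (k+1) a) • (X 0^k * X 1^(a+1) * P) := by
            refine Finset.sum_congr rfl fun a _ => ?_
            rw [Finset.sum_range_succ']
            conv_rhs => rw [Finset.sum_range_succ, Finset.sum_range_succ]
            rw [show ch γ r (r+1+1) a = 0 from by rw [ch, if_neg (by omega)],
              show ch γ r (r+1) a = 0 from by rw [ch, if_neg (by omega)]]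
            simp only [Nat.cast_zero, mul_zero, zero_mul, zero_smul, add_zero,
              Nat.add_sub_cancel]
            refine Finset.sum_congr rfl fun k _ => ?_
            congr 1
            push_cast
            ring
        _ = ∑ k ∈ Finset.range (r+1+1), ∑ a ∈ Finset.range (r+1),
            (2*((k:ℂ)+1) * ch γ r (k+1) a) • (X 0^k * X 1^(a+1) * P) := Finset.sum_comm
        _ = ∑ k ∈ Finset.range (r+1+1), ∑ a ∈ Finset.range (r+1+1),
            (if a = 0 then 0 else 2*((k:ℂ)+1) * ch γ r (k+1) (a-1))
              • (X 0^k * X 1^a * P) := by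
            refine Finset.sum_congr rfl fun k _ => ?_
            conv_rhs => rw [Finset.sum_range_succ']
            simp [Nat.add_sub_cancel]
    rw [hS1, hS2, ← Finset.sum_sub_distrib]
    refine Finset.sum_congr rfl fun p _ => ?_
    rw [← sub_smul, e_identity]

/-- In `𝒜 = ℂ[E₁,E₂,A₀,A₁]` with the derivation `f` as in the skein
lasagna module of `B² × S²`, `δ = 4E₂ - E₁²` and `v = A₀ - (1/2)E₁A₁`, fix `j, m, n : ℕ`
and set `γ = 2j + (n-m)/2 ∈ ℂ`. Then for every `r ≥ 1`,
`f^r(δʲ A₁^m vⁿ) = ∑_{k+2a=r} (-1)^a ((k+2a)⋯(k+1)/a!) (γ)(γ+1)⋯(γ+r-a-1) E₁^k E₂^a δʲ A₁^m vⁿ`.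
Here `E₁ = X 0`, `E₂ = X 1`, `A₀ = X 2`, `A₁ = X 3`, and the sum is over pairs
`(k,a)` of naturals with `k + 2a = r`. -/
theorem f_iterate_general_formula
    (f : Derivation ℂ (MvPolynomial (Fin 4) ℂ) (MvPolynomial (Fin 4) ℂ))
    (hf1 : f (X 0) = X 0 ^ 2 - 2 * X 1) (hf2 : f (X 1) = X 0 * X 1)
    (hf3 : f (X 2) = (1 / 2 : ℂ) • (X 0 * X 2) - X 1 * X 3)
    (hf4 : f (X 3) = -((1 / 2 : ℂ) • (X 0 * X 3)))
    (δ v : MvPolynomial (Fin 4) ℂ)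
    (hδ : δ = 4 * X 1 - X 0 ^ 2) (hv : v = X 2 - (1 / 2 : ℂ) • (X 0 * X 3))
    (j m n : ℕ) (γ : ℂ) (hγ : γ = 2 * j + ((n : ℂ) - m) / 2)
    (r : ℕ) (hr : 1 ≤ r) :
    (f.toLinearMap ^ r) (δ ^ j * X 3 ^ m * v ^ n) =
      ∑ p ∈ (Finset.range (r + 1) ×ˢ Finset.range (r + 1)).filter
          (fun p => p.1 + 2 * p.2 = r),
        ((-1 : ℂ) ^ p.2 *
            ((∏ i ∈ Finset.range (2 * p.2), ((p.1 : ℂ) + 2 * p.2 - i)) / (p.2.factorial : ℂ)) *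
            ∏ i ∈ Finset.range (r - p.2), (γ + i)) •
          (X 0 ^ p.1 * X 1 ^ p.2 * (δ ^ j * X 3 ^ m * v ^ n)) := by
  have hP : f (δ ^ j * X 3 ^ m * v ^ n) = γ • (X 0 * (δ ^ j * X 3 ^ m * v ^ n)) :=
    fP_eq f hf1 hf2 hf3 hf4 δ v hδ hv j m n γ hγ
  have hkey := key_step f hf1 hf2 (δ ^ j * X 3 ^ m * v ^ n) γ hP
  rw [main_induction f (δ ^ j * X 3 ^ m * v ^ n) γ hkey r, Finset.sum_filter]
  refine Finset.sum_congr rfl fun p hp => ?_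
  rw [ch, ite_smul, zero_smul]
  by_cases h : p.1 + 2*p.2 = r
  · rw [if_pos h, if_pos h]
    congr 1
    rw [cc, show r - p.2 = p.1 + p.2 from by omega, AP_eq_prod, desc_eq]
  · rw [if_neg h, if_neg h]
end
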